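/- For any unit vectors a and ŷ in R³ and any positive integer n, there exists a homogeneous harmonic polynomial h of degree n on R³ such that a·∇h(ŷ) = 1 and max over the unit sphere of |h| is at most √3/n. -/

import Mathlib

open MvPolynomial

noncomputable section HarmonicAux

/-- Linear form `∑ uⱼ Xⱼ` as a polynomial. -/
def linP (u : Fin 3 → ℝ) : MvPolynomial (Fin 3) ℝ := ∑ j, C (u j) * X j

/-- Real and imaginary parts of `(u·x + i v·x)^k`. -/
def PQ (u v : Fin 3 → ℝ) : ℕ → MvPolynomial (Fin 3) ℝ × MvPolynomial (Fin 3) ℝ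
  | 0 => (1, 0)
  | k + 1 => (linP u * (PQ u v k).1 - linP v * (PQ u v k).2,
              linP u * (PQ u v k).2 + linP v * (PQ u v k).1)

lemma pderiv_linP (u : Fin 3 → ℝ) (i : Fin 3) : pderiv i (linP u) = C (u i) := by
  classical
  simp [linP, pderiv_mul, pderiv_C, pderiv_X, Pi.single_apply, mul_ite,
    Finset.sum_ite_eq']

lemma linP_isHomogeneous (u : Fin 3 → ℝ) : (linP u).IsHomogeneous 1 := by
  refine IsHomogeneous.sum _ _ _ fun j _ => ?_
  simpa using (isHomogeneous_X ℝ j).C_mul (u j)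

lemma PQ_isHomogeneous (u v : Fin 3 → ℝ) :
    ∀ k, (PQ u v k).1.IsHomogeneous k ∧ (PQ u v k).2.IsHomogeneous k := by
  intro k
  induction k with
  | zero => exact ⟨isHomogeneous_one _ _, isHomogeneous_zero _ _ _⟩
  | succ k ih =>
    constructor
    · have h := ((linP_isHomogeneous u).mul ih.1).sub ((linP_isHomogeneous v).mul ih.2)
      rw [add_comm 1 k] at h; exact h
    · have h := ((linP_isHomogeneous u).mul ih.2).add ((linP_isHomogeneous v).mul ih.1)
      rw [add_comm 1 k] at h; exact h

lemma PQ_pderiv (u v : Fin 3 → ℝ) :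
    ∀ (k : ℕ) (i : Fin 3),
      pderiv i (PQ u v (k + 1)).1
        = C ((k + 1 : ℕ) : ℝ) * (C (u i) * (PQ u v k).1 - C (v i) * (PQ u v k).2) ∧
      pderiv i (PQ u v (k + 1)).2
        = C ((k + 1 : ℕ) : ℝ) * (C (u i) * (PQ u v k).2 + C (v i) * (PQ u v k).1) := by
  intro k
  induction k with
  | zero =>
    intro i
    constructor <;>
      simp [PQ, pderiv_mul, pderiv_linP, pderiv_C]
  | succ k ih =>
    intro i
    obtain ⟨ih1, ih2⟩ := ih i
    have e1 : (PQ u v (k + 1 + 1)).1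
        = linP u * (PQ u v (k + 1)).1 - linP v * (PQ u v (k + 1)).2 := rfl
    have e2 : (PQ u v (k + 1 + 1)).2
        = linP u * (PQ u v (k + 1)).2 + linP v * (PQ u v (k + 1)).1 := rfl
    have e3 : (PQ u v (k + 1)).1 = linP u * (PQ u v k).1 - linP v * (PQ u v k).2 := rfl
    have e4 : (PQ u v (k + 1)).2 = linP u * (PQ u v k).2 + linP v * (PQ u v k).1 := rfl
    constructor
    · rw [e1, map_sub, pderiv_mul, pderiv_mul, pderiv_linP, pderiv_linP, ih1, ih2, e3, e4]
      push_cast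
      simp only [map_add, map_one, map_ofNat]
      ring
    · rw [e2, map_add, pderiv_mul, pderiv_mul, pderiv_linP, pderiv_linP, ih1, ih2, e3, e4]
      push_cast
      simp only [map_add, map_one, map_ofNat]
      ring

lemma PQ_harmonic (u v : Fin 3 → ℝ) (hu : ∑ i, u i * u i = 1) (hv : ∑ i, v i * v i = 1)
    (huv : ∑ i, u i * v i = 0) (k : ℕ) :
    (∑ i : Fin 3, pderiv i (pderiv i (PQ u v k).1)) = 0 ∧
    (∑ i : Fin 3, pderiv i (pderiv i (PQ u v k).2)) = 0 := by
  match k with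
  | 0 => simp [PQ]
  | 1 =>
    constructor <;>
      · refine Finset.sum_eq_zero fun i _ => ?_
        first
        | rw [(PQ_pderiv u v 0 i).1]
        | rw [(PQ_pderiv u v 0 i).2]
        simp [PQ, pderiv_mul, pderiv_C]
  | (m + 2) =>
    have key1 : ∀ i : Fin 3, pderiv i (pderiv i (PQ u v (m + 2)).1)
        = C (((m + 2 : ℕ) : ℝ) * ((m + 1 : ℕ) : ℝ)) *
            (C (u i * u i - v i * v i) * (PQ u v m).1
              - C (u i * v i + v i * u i) * (PQ u v m).2) := by
      intro i
      rw [(PQ_pderiv u v (m + 1) i).1, pderiv_mul, pderiv_C, map_sub, pderiv_mul, pderiv_mul,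
        pderiv_C, pderiv_C, (PQ_pderiv u v m i).1, (PQ_pderiv u v m i).2]
      push_cast
      simp only [map_add, map_one, map_sub, map_mul, map_ofNat]
      ring
    have key2 : ∀ i : Fin 3, pderiv i (pderiv i (PQ u v (m + 2)).2)
        = C (((m + 2 : ℕ) : ℝ) * ((m + 1 : ℕ) : ℝ)) *
            (C (u i * u i - v i * v i) * (PQ u v m).2
              + C (u i * v i + v i * u i) * (PQ u v m).1) := by
      intro i
      rw [(PQ_pderiv u v (m + 1) i).2, pderiv_mul, pderiv_C, map_add, pderiv_mul, pderiv_mul,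
        pderiv_C, pderiv_C, (PQ_pderiv u v m i).1, (PQ_pderiv u v m i).2]
      push_cast
      simp only [map_add, map_one, map_sub, map_mul, map_ofNat]
      ring
    have s1 : ∑ i : Fin 3, (u i * u i - v i * v i) = 0 := by
      rw [Finset.sum_sub_distrib, hu, hv]; ring
    have s2 : ∑ i : Fin 3, (u i * v i + v i * u i) = 0 := by
      have : ∑ i : Fin 3, v i * u i = 0 := by
        rw [← huv]; exact Finset.sum_congr rfl fun i _ => mul_comm _ _
      rw [Finset.sum_add_distrib, huv, this]; ring
    constructor
    · rw [Finset.sum_congr rfl fun i _ => key1 i, ← Finset.mul_sum]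
      rw [show (∑ i : Fin 3, (C (u i * u i - v i * v i) * (PQ u v m).1
          - C (u i * v i + v i * u i) * (PQ u v m).2))
        = (∑ i : Fin 3, C (u i * u i - v i * v i)) * (PQ u v m).1
          - (∑ i : Fin 3, C (u i * v i + v i * u i)) * (PQ u v m).2 by
          rw [Finset.sum_sub_distrib, Finset.sum_mul, Finset.sum_mul]]
      rw [← map_sum, ← map_sum, s1, s2]
      simp
    · rw [Finset.sum_congr rfl fun i _ => key2 i, ← Finset.mul_sum]
      rw [show (∑ i : Fin 3, (C (u i * u i - v i * v i) * (PQ u v m).2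
          + C (u i * v i + v i * u i) * (PQ u v m).1))
        = (∑ i : Fin 3, C (u i * u i - v i * v i)) * (PQ u v m).2
          + (∑ i : Fin 3, C (u i * v i + v i * u i)) * (PQ u v m).1 by
          rw [Finset.sum_add_distrib, Finset.sum_mul, Finset.sum_mul]]
      rw [← map_sum, ← map_sum, s1, s2]
      simp

lemma eval_linP (u : Fin 3 → ℝ) (x : Fin 3 → ℝ) :
    eval x (linP u) = ∑ j, u j * x j := by
  simp [linP]

lemma PQ_eval_sq (u v : Fin 3 → ℝ) (x : Fin 3 → ℝ) :
    ∀ k, (eval x (PQ u v k).1) ^ 2 + (eval x (PQ u v k).2) ^ 2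
      = ((eval x (linP u)) ^ 2 + (eval x (linP v)) ^ 2) ^ k := by
  intro k
  induction k with
  | zero => simp [PQ]
  | succ k ih =>
    have e1 : (PQ u v (k + 1)).1 = linP u * (PQ u v k).1 - linP v * (PQ u v k).2 := rfl
    have e2 : (PQ u v (k + 1)).2 = linP u * (PQ u v k).2 + linP v * (PQ u v k).1 := rfl
    have hps : ((eval x) (linP u) ^ 2 + (eval x) (linP v) ^ 2) ^ (k + 1)
        = ((eval x) (linP u) ^ 2 + (eval x) (linP v) ^ 2) ^ k *
          ((eval x) (linP u) ^ 2 + (eval x) (linP v) ^ 2) := pow_succ _ _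
    rw [e1, e2, map_sub, map_add, map_mul, map_mul, map_mul, map_mul, hps, ← ih]
    ring

lemma PQ_eval_at (u v : Fin 3 → ℝ) (y : Fin 3 → ℝ)
    (hA : eval y (linP u) = 1) (hB : eval y (linP v) = 0) :
    ∀ k, eval y (PQ u v k).1 = 1 ∧ eval y (PQ u v k).2 = 0 := by
  intro k
  induction k with
  | zero => simp [PQ]
  | succ k ih =>
    have e1 : (PQ u v (k + 1)).1 = linP u * (PQ u v k).1 - linP v * (PQ u v k).2 := rfl
    have e2 : (PQ u v (k + 1)).2 = linP u * (PQ u v k).2 + linP v * (PQ u v k).1 := rfl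
    constructor
    · rw [e1, map_sub, map_mul, map_mul, hA, hB, ih.1, ih.2]; ring
    · rw [e2, map_add, map_mul, map_mul, hA, hB, ih.1, ih.2]; ring

/-- There is a unit vector orthogonal to any given unit vector in `ℝ³`. -/
lemma exists_perp (y : EuclideanSpace ℝ (Fin 3)) (hy : y ≠ 0) :
    ∃ e : EuclideanSpace ℝ (Fin 3), ‖e‖ = 1 ∧ inner ℝ y e = (0 : ℝ) := by
  have hne : (ℝ ∙ y)ᗮ ≠ ⊥ := by
    intro h
    rw [Submodule.orthogonal_eq_bot_iff] at h
    have h1 : Module.finrank ℝ (ℝ ∙ y) = 1 := finrank_span_singleton hy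
    rw [h, finrank_top, finrank_euclideanSpace_fin] at h1
    norm_num at h1
  obtain ⟨w, hwmem, hw0⟩ := (Submodule.ne_bot_iff _).1 hne
  refine ⟨(‖w‖⁻¹ : ℝ) • w, norm_smul_inv_norm hw0, ?_⟩
  have : inner ℝ y w = (0 : ℝ) :=
    hwmem y (Submodule.mem_span_singleton_self y)
  rw [real_inner_smul_right, this, mul_zero]

/-- Bessel-type inequality for two orthonormal vectors. -/
lemma bessel_two {E : Type*} [NormedAddCommGroup E] [InnerProductSpace ℝ E]
    (u v x : E) (hu : ‖u‖ = 1) (hv : ‖v‖ = 1) (huv : inner ℝ u v = (0 : ℝ))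
    (hx : ‖x‖ = 1) : (inner ℝ u x : ℝ) ^ 2 + (inner ℝ v x : ℝ) ^ 2 ≤ 1 := by
  set r : ℝ := inner ℝ u x with hr
  set s : ℝ := inner ℝ v x with hs
  have h1 : (inner ℝ u u : ℝ) = 1 := by rw [real_inner_self_eq_norm_sq, hu]; norm_num
  have h2 : (inner ℝ v v : ℝ) = 1 := by rw [real_inner_self_eq_norm_sq, hv]; norm_num
  have h3 : (inner ℝ x x : ℝ) = 1 := by rw [real_inner_self_eq_norm_sq, hx]; norm_num
  have hvu : (inner ℝ v u : ℝ) = 0 := by rw [real_inner_comm]; exact huv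
  have hxu : (inner ℝ x u : ℝ) = r := by rw [real_inner_comm]
  have hxv : (inner ℝ x v : ℝ) = s := by rw [real_inner_comm]
  have hexp : (inner ℝ (x - r • u - s • v) (x - r • u - s • v) : ℝ) = 1 - r ^ 2 - s ^ 2 := by
    simp only [inner_sub_left, inner_sub_right, real_inner_smul_left, real_inner_smul_right,
      h1, h2, h3, huv, hvu, hxu, hxv, ← hr, ← hs]
    ring
  have hnn := real_inner_self_nonneg (x := x - r • u - s • v)
  linarith [hnn.trans_eq hexp]

end HarmonicAux

set_option maxHeartbeats 1000000 in
/-- For any unit vectors `a` and `ŷ` in `ℝ³` and any positive integer `n`, there exists a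
homogeneous harmonic polynomial `h` of degree `n` such that `a·∇h(ŷ) = 1` and
`max_{|x|=1} |h(x)| ≤ √3/n`. -/
theorem statement0 (a yhat : EuclideanSpace ℝ (Fin 3)) (ha : ‖a‖ = 1) (hy : ‖yhat‖ = 1)
    (n : ℕ) (hn : 1 ≤ n) :
    ∃ h : MvPolynomial (Fin 3) ℝ,
      h.IsHomogeneous n ∧
      (∑ i : Fin 3, pderiv i (pderiv i h)) = 0 ∧
      (∑ i : Fin 3, a i * eval (fun j => yhat j) (pderiv i h)) = 1 ∧
      ∀ x : EuclideanSpace ℝ (Fin 3), ‖x‖ = 1 →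
        |eval (fun j => x j) h| ≤ Real.sqrt 3 / n := by
  classical
  have hy0 : yhat ≠ 0 := by
    intro h; rw [h, norm_zero] at hy; norm_num at hy
  obtain ⟨e₀, he₀, hye₀⟩ := exists_perp yhat hy0
  set α : ℝ := inner ℝ a yhat with hα
  -- decompose `a = α • yhat + β • e` with `e` a unit vector orthogonal to `yhat`
  obtain ⟨β, e, he1, he2, hαβ, hdecomp⟩ :
      ∃ (β : ℝ) (e : EuclideanSpace ℝ (Fin 3)), ‖e‖ = 1 ∧ inner ℝ yhat e = (0 : ℝ) ∧
        α ^ 2 + β ^ 2 = 1 ∧ a = α • yhat + β • e := by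
    by_cases hb : a - α • yhat = 0
    · have hay : a = α • yhat := by rwa [sub_eq_zero] at hb
      have hα2 : α ^ 2 = 1 := by
        have : ‖a‖ = |α| * ‖yhat‖ := by rw [hay, norm_smul, Real.norm_eq_abs]
        rw [ha, hy, mul_one] at this
        have := sq_abs α
        nlinarith
      exact ⟨0, e₀, he₀, hye₀, by rw [hα2]; ring, by rw [hay]; simp⟩
    · set b := a - α • yhat with hbdef
      have hyb : inner ℝ yhat b = (0 : ℝ) := by
        rw [hbdef, inner_sub_right, real_inner_smul_right, real_inner_self_eq_norm_sq, hy,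
          real_inner_comm, ← hα]
        ring
      have hbb : (inner ℝ b b : ℝ) = ‖b‖ ^ 2 := real_inner_self_eq_norm_sq b
      have hsum : α ^ 2 + ‖b‖ ^ 2 = 1 := by
        have hA : a = α • yhat + b := by rw [hbdef]; abel
        have h1 : (inner ℝ a a : ℝ) = 1 := by
          rw [real_inner_self_eq_norm_sq, ha]; norm_num
        have hby : (inner ℝ b yhat : ℝ) = 0 := by rw [real_inner_comm]; exact hyb
        have hyy : (inner ℝ yhat yhat : ℝ) = 1 := by
          rw [real_inner_self_eq_norm_sq, hy]; norm_num
        rw [hA] at h1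
        simp only [inner_add_left, inner_add_right, real_inner_smul_left,
          real_inner_smul_right, hyy, hyb, hby, hbb] at h1
        nlinarith
      refine ⟨‖b‖, (‖b‖⁻¹ : ℝ) • b, norm_smul_inv_norm hb, ?_, hsum, ?_⟩
      · rw [real_inner_smul_right, hyb, mul_zero]
      · rw [smul_smul, mul_inv_cancel₀ (norm_ne_zero_iff.2 hb), one_smul, hbdef]; abel
  -- coordinate versions
  set u : Fin 3 → ℝ := fun i => yhat i with hu_def
  set v : Fin 3 → ℝ := fun i => e i with hv_def
  have inner_coord : ∀ w z : EuclideanSpace ℝ (Fin 3),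
      (inner ℝ w z : ℝ) = ∑ i, w i * z i := by
    intro w z
    rw [PiLp.inner_apply]
    simp [RCLike.inner_apply, conj_trivial, mul_comm]
  have hu : ∑ i, u i * u i = 1 := by
    rw [← inner_coord, real_inner_self_eq_norm_sq, hy]; norm_num
  have hv : ∑ i, v i * v i = 1 := by
    rw [← inner_coord, real_inner_self_eq_norm_sq, he1]; norm_num
  have huv : ∑ i, u i * v i = 0 := by rw [← inner_coord]; exact he2
  have haC : ∀ i, a i = α * u i + β * v i := by
    intro i
    rw [hdecomp]
    simp [hu_def, hv_def]
  have ha2 : ∑ i, a i * a i = 1 := by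
    rw [← inner_coord, real_inner_self_eq_norm_sq, ha]; norm_num
  have hn0 : (n : ℝ) ≠ 0 := Nat.cast_ne_zero.2 (by omega)
  obtain ⟨m, rfl⟩ : ∃ m, n = m + 1 := ⟨n - 1, by omega⟩
  set P := (PQ u v (m + 1)).1 with hP
  set Q := (PQ u v (m + 1)).2 with hQ
  refine ⟨C (α / (m + 1 : ℕ)) * P + C (β / (m + 1 : ℕ)) * Q, ?_, ?_, ?_, ?_⟩
  · exact ((PQ_isHomogeneous u v (m + 1)).1.C_mul _).add
      ((PQ_isHomogeneous u v (m + 1)).2.C_mul _)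
  · have hh := PQ_harmonic u v hu hv huv (m + 1)
    have step : ∀ i : Fin 3,
        pderiv i (pderiv i (C (α / (m + 1 : ℕ)) * P + C (β / (m + 1 : ℕ)) * Q))
          = C (α / (m + 1 : ℕ)) * pderiv i (pderiv i P)
            + C (β / (m + 1 : ℕ)) * pderiv i (pderiv i Q) := by
      intro i
      simp [pderiv_mul, pderiv_C]
    rw [Finset.sum_congr rfl fun i _ => step i, Finset.sum_add_distrib, ← Finset.mul_sum,
      ← Finset.mul_sum, hh.1, hh.2, mul_zero, mul_zero, add_zero]
  · -- gradient condition
    set yc : Fin 3 → ℝ := fun j => yhat j with hyc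
    have hAy : eval yc (linP u) = 1 := by
      rw [eval_linP, ← hu]
    have hBy : eval yc (linP v) = 0 := by
      rw [eval_linP]
      rw [← huv]
      exact Finset.sum_congr rfl fun i _ => by simp [hyc, hu_def, mul_comm]
    have hev := PQ_eval_at u v yc hAy hBy m
    have key : ∀ i : Fin 3,
        eval yc (pderiv i (C (α / (m + 1 : ℕ)) * P + C (β / (m + 1 : ℕ)) * Q)) = a i := by
      intro i
      rw [map_add, pderiv_mul, pderiv_mul, pderiv_C, pderiv_C, zero_mul, zero_mul,
        zero_add, zero_add, hP, hQ, (PQ_pderiv u v m i).1, (PQ_pderiv u v m i).2]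
      simp only [map_add, map_mul, map_sub, eval_C, hev.1, hev.2]
      rw [haC i]
      field_simp
      ring
    rw [Finset.sum_congr rfl fun i _ => by rw [key i]]
    exact ha2
  · -- sup bound
    intro x hx
    set xc : Fin 3 → ℝ := fun j => x j with hxc
    have hrs : (eval xc (linP u)) ^ 2 + (eval xc (linP v)) ^ 2 ≤ 1 := by
      have h1 : eval xc (linP u) = inner ℝ yhat x := by
        rw [eval_linP, inner_coord]
      have h2 : eval xc (linP v) = inner ℝ e x := by
        rw [eval_linP, inner_coord]
      rw [h1, h2]
      exact bessel_two yhat e x hy he1 he2 hx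
    have hpow : ((eval xc (linP u)) ^ 2 + (eval xc (linP v)) ^ 2) ^ (m + 1) ≤ 1 :=
      pow_le_one₀ (by positivity) hrs
    have hsq := PQ_eval_sq u v xc (m + 1)
    set p := eval xc P with hp
    set q := eval xc Q with hq
    have hpq : p ^ 2 + q ^ 2 ≤ 1 := by
      rw [hp, hq, hP, hQ, hsq]; exact hpow
    have habs : |α * p + β * q| ≤ 1 := by
      have hsq2 : (α * p + β * q) ^ 2 ≤ 1 := by nlinarith [sq_nonneg (α * q - β * p)]
      calc |α * p + β * q| = Real.sqrt ((α * p + β * q) ^ 2) := (Real.sqrt_sq_eq_abs _).symm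
        _ ≤ Real.sqrt 1 := Real.sqrt_le_sqrt hsq2
        _ = 1 := Real.sqrt_one
    have heval : eval xc (C (α / (m + 1 : ℕ)) * P + C (β / (m + 1 : ℕ)) * Q)
        = (α * p + β * q) / ((m + 1 : ℕ) : ℝ) := by
      rw [map_add, map_mul, map_mul, eval_C, eval_C, ← hp, ← hq]
      ring
    rw [heval, abs_div, abs_of_nonneg (by positivity : (0:ℝ) ≤ ((m + 1 : ℕ) : ℝ))]
    have h3 : (1 : ℝ) ≤ Real.sqrt 3 := by
      rw [show (1:ℝ) = Real.sqrt 1 by simp]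
      exact Real.sqrt_le_sqrt (by norm_num)
    have hmpos : (0 : ℝ) < ((m + 1 : ℕ) : ℝ) := by positivity
    calc |α * p + β * q| / ((m + 1 : ℕ) : ℝ) ≤ 1 / ((m + 1 : ℕ) : ℝ) := by gcongr
      _ ≤ Real.sqrt 3 / ((m + 1 : ℕ) : ℝ) := by gcongr
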